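/- arXiv:1704.00990 — 5 statements merged into one kernel-verified Lean document; each statement's English description precedes it below -/
import Mathlib

section
/- Let G be an almost simple group with socle S and let K be a permutation group with G* ≤ K ≤ Sym(G). Then every K-block B with 1 ∈ B and |B| ≥ 2 is the underlying set of a normal subgroup of G containing S. -/
/-- The subgroup of `Sym(A)` consisting of the right translations `x ↦ x * g`. -/
def rightMuls (A : Type*) [Group A] : Subgroup (Equiv.Perm A) :=
  (MulAction.toPermHom Aᵐᵒᵖ A).range

/-- The holomorph of `A`, i.e. the normalizer in `Sym(A)` of the group of right
translations. -/
def Hol (A : Type*) [Group A] : Subgroup (Equiv.Perm A) :=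
  Subgroup.normalizer (rightMuls A : Set (Equiv.Perm A))

/-- `D(2,A)`: the subgroup of `Sym(A)` generated by `Hol(A)` and the inversion
permutation `g ↦ g⁻¹`. -/
def D2 (A : Type*) [Group A] : Subgroup (Equiv.Perm A) :=
  Hol A ⊔ Subgroup.closure {Equiv.inv A}

/-- The homomorphism `H × H →* Sym(A)` sending `(h₁, h₂)` to `x ↦ h₁ * x * h₂⁻¹`. -/
def biTransHom {A : Type*} [Group A] (H : Subgroup A) : H × H →* Equiv.Perm A where
  toFun p := (Equiv.mulLeft (p.1 : A)).trans (Equiv.mulRight ((p.2 : A)⁻¹))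
  map_one' := by ext x; simp
  map_mul' p q := by ext x; simp [mul_assoc]

/-- `H*`: the subgroup of `Sym(A)` of all permutations `x ↦ h₁ * x * h₂` with
`h₁, h₂ ∈ H`. -/
def starGroup {A : Type*} [Group A] (H : Subgroup A) : Subgroup (Equiv.Perm A) :=
  (biTransHom H).range

/-- The automorphism group of the Cayley graph `Cay(A, X)`: all permutations `f`
of `A` such that `h * g⁻¹ ∈ X ↔ f h * (f g)⁻¹ ∈ X` for all `g, h`. -/
def cayAut {A : Type*} [Group A] (X : Set A) : Subgroup (Equiv.Perm A) where
  carrier := {f : Equiv.Perm A | ∀ g h : A, h * g⁻¹ ∈ X ↔ f h * (f g)⁻¹ ∈ X}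
  one_mem' := by intro g h; simp
  mul_mem' := by
    intro a b ha hb g h
    simpa [Equiv.Perm.mul_apply] using (hb g h).trans (ha (b g) (b h))
  inv_mem' := by
    intro a ha g h
    simpa using (ha (a⁻¹ g) (a⁻¹ h)).symm

/-- A `K`-block: a subset `B` such that every `k ∈ K` either fixes `B` setwise or
moves it to a disjoint set. -/
def IsBlock {A : Type*} [Group A] (K : Subgroup (Equiv.Perm A)) (B : Set A) : Prop :=
  ∀ k ∈ K, (k : Equiv.Perm A) '' B = B ∨ ((k : Equiv.Perm A) '' B) ∩ B = ∅

/-- The minimal block of `K`: the intersection of all `K`-blocks of size at least 2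
containing the identity. -/
def minBlock {A : Type*} [Group A] (K : Subgroup (Equiv.Perm A)) : Set A :=
  ⋂₀ {B : Set A | IsBlock K B ∧ (1 : A) ∈ B ∧ 2 ≤ B.ncard}

/-- The right coset `L * g`. -/
def rcoset {A : Type*} [Group A] (L : Subgroup A) (g : A) : Set A :=
  {x : A | x * g⁻¹ ∈ L}

/-- `K_𝔏`: the subgroup of all elements of `K` mapping each right coset of `L` to
itself. -/
def stabCosets {A : Type*} [Group A] (K : Subgroup (Equiv.Perm A)) (L : Subgroup A) :
    Subgroup (Equiv.Perm A) where
  carrier := {f : Equiv.Perm A | f ∈ K ∧ ∀ x : A, f x * x⁻¹ ∈ L}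
  one_mem' := ⟨K.one_mem, fun x => by simpa using L.one_mem⟩
  mul_mem' := by
    rintro a b ⟨haK, ha⟩ ⟨hbK, hb⟩
    refine ⟨K.mul_mem haK hbK, fun x => ?_⟩
    have := L.mul_mem (ha (b x)) (hb x)
    simpa [Equiv.Perm.mul_apply, mul_assoc] using this
  inv_mem' := by
    rintro a ⟨haK, ha⟩
    refine ⟨K.inv_mem haK, fun x => ?_⟩
    have := L.inv_mem (ha (a⁻¹ x))
    simpa [mul_inv_rev] using this

/-- Two subsets `X`, `X'` are equivalent (w.r.t. `K` and `L`) if every element of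
`K_𝔏` fixes `X` pointwise iff it fixes `X'` pointwise. -/
def cosetEquiv {A : Type*} [Group A] (K : Subgroup (Equiv.Perm A)) (L : Subgroup A)
    (X X' : Set A) : Prop :=
  ∀ f ∈ stabCosets K L,
    ((∀ x ∈ X, (f : Equiv.Perm A) x = x) ↔ (∀ x ∈ X', (f : Equiv.Perm A) x = x))

/-- The union `U` of the right cosets of `L` that are equivalent to `L`. -/
def Uset {A : Type*} [Group A] (K : Subgroup (Equiv.Perm A)) (L : Subgroup A) : Set A :=
  {x : A | cosetEquiv K L (L : Set A) (rcoset L x)}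

/-- A permutation group `K` is 2-closed if it contains every permutation `f` such
that every pair of points can be moved as by `f` by some element of `K`. -/
def Is2Closed {A : Type*} [Group A] (K : Subgroup (Equiv.Perm A)) : Prop :=
  ∀ f : Equiv.Perm A, (∀ a b : A, ∃ k ∈ K, (k : Equiv.Perm A) a = f a ∧ k b = f b) → f ∈ K

/-- every nontrivial `K`-block containing the identity is the underlying
set of a normal subgroup of `G` containing `S`. -/
theorem block_is_normal_subgroup (G : Type*) [Group G] [Fintype G]
    (S : Subgroup G) (hSnormal : S.Normal) (hSsimple : IsSimpleGroup S)
    (hSnonabelian : ¬ ∀ a b : S, a * b = b * a)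
    (hScent : ∀ g : G, (∀ s ∈ S, g * s = s * g) → g = 1)
    (K : Subgroup (Equiv.Perm G)) (hGK : starGroup (⊤ : Subgroup G) ≤ K)
    (B : Set G) (hB : IsBlock K B) (h1B : (1 : G) ∈ B) (hB2 : 2 ≤ B.ncard) :
    ∃ H : Subgroup G, H.Normal ∧ S ≤ H ∧ (H : Set G) = B := by

  classical
  -- Every map x ↦ a * x * b lies in K
  have hmem : ∀ a b : G, ((Equiv.mulLeft a).trans (Equiv.mulRight b)) ∈ K := by
    intro a b
    apply hGK
    refine ⟨(⟨a, trivial⟩, ⟨b⁻¹, trivial⟩), ?_⟩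
    ext x
    simp [biTransHom]
  -- Key block property
  have key : ∀ a b : G, (∃ y ∈ B, a * y * b ∈ B) → (∀ x, x ∈ B ↔ a * x * b ∈ B) := by
    rintro a b ⟨y, hy, hy'⟩
    rcases hB _ (hmem a b) with h | h
    · intro x
      constructor
      · intro hx
        rw [← h]
        exact ⟨x, hx, rfl⟩
      · intro hx
        rw [← h] at hx
        obtain ⟨z, hz, hz'⟩ := hx
        simp only [Equiv.trans_apply, Equiv.coe_mulLeft, Equiv.coe_mulRight] at hz'
        have : z = x := by
          have := mul_right_cancel hz'
          exact mul_left_cancel this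
        rwa [← this]
    · exfalso
      have hmem' : a * y * b ∈ (((Equiv.mulLeft a).trans (Equiv.mulRight b) :
          Equiv.Perm G) '' B) ∩ B := ⟨⟨y, hy, rfl⟩, hy'⟩
      rw [h] at hmem'
      exact hmem'
  have hmul : ∀ a ∈ B, ∀ x : G, x ∈ B ↔ a * x ∈ B := by
    intro a ha x
    have := key a 1 ⟨1, h1B, by simpa using ha⟩ x
    simpa using this
  have hconj : ∀ g : G, ∀ x : G, x ∈ B ↔ g * x * g⁻¹ ∈ B := by
    intro g x
    exact key g g⁻¹ ⟨1, h1B, by simpa using h1B⟩ x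
  -- B is a subgroup
  have hinv : ∀ a ∈ B, a⁻¹ ∈ B := by
    intro a ha
    have := (hmul a ha a⁻¹).mpr (by simpa using h1B)
    exact this
  let H : Subgroup G :=
    { carrier := B
      one_mem' := h1B
      mul_mem' := by
        intro a b ha hb
        exact (hmul a ha b).mp hb
      inv_mem' := by
        intro a ha
        exact hinv a ha }
  have hHnormal : H.Normal := by
    constructor
    intro n hn g
    exact (hconj g n).mp hn
  -- nontrivial element of B
  obtain ⟨a, haB, ha1⟩ : ∃ a ∈ B, a ≠ 1 := by
    by_contra hcon
    push_neg at hcon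
    have : B = {1} := Set.eq_singleton_iff_unique_mem.2 ⟨h1B, hcon⟩
    rw [this, Set.ncard_singleton] at hB2
    omega
  -- S ≤ H
  have hSH : S ≤ H := by
    haveI hnorm : (H.subgroupOf S).Normal := hHnormal.subgroupOf S
    rcases hSsimple.eq_bot_or_eq_top_of_normal (H.subgroupOf S) hnorm with hb | ht
    · exfalso
      apply ha1
      apply hScent a
      intro s hs
      have hc1 : a * s * a⁻¹ * s⁻¹ ∈ H := by
        have h1 : s * a⁻¹ * s⁻¹ ∈ H := hHnormal.conj_mem a⁻¹ (hinv a haB) s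
        have := H.mul_mem (show a ∈ H from haB) h1
        simpa [mul_assoc] using this
      have hc2 : a * s * a⁻¹ * s⁻¹ ∈ S := by
        have h1 : a * s * a⁻¹ ∈ S := hSnormal.conj_mem s hs a
        exact S.mul_mem h1 (S.inv_mem hs)
      have : (⟨a * s * a⁻¹ * s⁻¹, hc2⟩ : S) ∈ H.subgroupOf S := hc1
      rw [hb] at this
      have heq : a * s * a⁻¹ * s⁻¹ = 1 := by
        simpa [Subgroup.mem_bot, Subtype.ext_iff] using this
      calc a * s = (a * s * a⁻¹ * s⁻¹) * (s * a) := by group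
        _ = s * a := by rw [heq]; group
    · intro s hs
      have : (⟨s, hs⟩ : S) ∈ H.subgroupOf S := ht ▸ Subgroup.mem_top _
      exact this
  exact ⟨H, hHnormal, hSH, rfl⟩
end

section
/- Let G be an almost simple group with socle S, let K be a permutation group with G* ≤ K ≤ Sym(G), and let L be the intersection of all K-blocks of size at least 2 containing the identity of G. Then L is the underlying set of a normal subgroup of G containing S, and moreover the centralizer of S in this subgroup is trivial; in particular, this subgroup is an almost simple group whose socle equals S. -/
section Aux

variable {G : Type*} [Group G] [Fintype G]

lemma starMem (K : Subgroup (Equiv.Perm G)) (hGK : starGroup (⊤ : Subgroup G) ≤ K)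
    (a b : G) : ((Equiv.mulLeft a).trans (Equiv.mulRight b)) ∈ K := by
  apply hGK
  exact ⟨(⟨a, trivial⟩, ⟨b⁻¹, trivial⟩), by ext x; simp [biTransHom]⟩

lemma block_image_eq {K : Subgroup (Equiv.Perm G)} {B : Set G} (hB : IsBlock K B)
    {k : Equiv.Perm G} (hk : k ∈ K) {x : G} (hx1 : x ∈ k '' B) (hx2 : x ∈ B) :
    k '' B = B := by
  rcases hB k hk with h | h
  · exact h
  · exact absurd (Set.mem_inter hx1 hx2) (by simp [h])

lemma block_facts (S : Subgroup G) (hSnormal : S.Normal) (hSsimple : IsSimpleGroup S)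
    (hScent : ∀ g : G, (∀ s ∈ S, g * s = s * g) → g = 1)
    (K : Subgroup (Equiv.Perm G)) (hGK : starGroup (⊤ : Subgroup G) ≤ K)
    (B : Set G) (hB : IsBlock K B) (h1 : (1 : G) ∈ B) (h2 : 2 ≤ B.ncard) :
    (∀ g ∈ B, ∀ h ∈ B, g * h ∈ B) ∧ (∀ g ∈ B, g⁻¹ ∈ B) ∧
    (∀ g : G, ∀ b ∈ B, g * b * g⁻¹ ∈ B) ∧ (S : Set G) ⊆ B := by
  have hmul : ∀ g ∈ B, ∀ h ∈ B, g * h ∈ B := by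
    intro g hg h hh
    set k := (Equiv.mulLeft g).trans (Equiv.mulRight 1) with hkdef
    have hk : k ∈ K := starMem K hGK g 1
    have heq : k '' B = B :=
      block_image_eq hB hk (x := g) ⟨1, h1, by simp [hkdef]⟩ hg
    have : k h ∈ k '' B := ⟨h, hh, rfl⟩
    rw [heq] at this
    simpa [hkdef] using this
  have hinv : ∀ g ∈ B, g⁻¹ ∈ B := by
    intro g hg
    set k := (Equiv.mulLeft 1).trans (Equiv.mulRight g⁻¹) with hkdef
    have hk : k ∈ K := starMem K hGK 1 g⁻¹
    have heq : k '' B = B :=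
      block_image_eq hB hk (x := (1 : G)) ⟨g, hg, by simp [hkdef]⟩ h1
    have : k 1 ∈ k '' B := ⟨1, h1, rfl⟩
    rw [heq] at this
    simpa [hkdef] using this
  have hconj : ∀ g : G, ∀ b ∈ B, g * b * g⁻¹ ∈ B := by
    intro g b hb
    set k := (Equiv.mulLeft g).trans (Equiv.mulRight g⁻¹) with hkdef
    have hk : k ∈ K := starMem K hGK g g⁻¹
    have heq : k '' B = B :=
      block_image_eq hB hk (x := (1 : G)) ⟨1, h1, by simp [hkdef]⟩ h1
    have : k b ∈ k '' B := ⟨b, hb, rfl⟩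
    rw [heq] at this
    simpa [hkdef] using this
  refine ⟨hmul, hinv, hconj, ?_⟩
  -- build the normal subgroup N with carrier B
  set N : Subgroup G :=
    { carrier := B
      one_mem' := h1
      mul_mem' := fun ha hb => hmul _ ha _ hb
      inv_mem' := fun ha => hinv _ ha } with hNdef
  have hNnormal : N.Normal := ⟨fun n hn g => hconj g n hn⟩
  -- B has a nontrivial element
  obtain ⟨b0, hb0B, hb0ne⟩ := Set.exists_ne_of_one_lt_ncard (lt_of_lt_of_le one_lt_two h2) 1
  -- consider (N ⊓ S) as a normal subgroup of S
  have hMnormal : ((N ⊓ S).subgroupOf S).Normal :=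
    by
    have : (N ⊓ S).Normal :=
      ⟨fun n hn g => ⟨hNnormal.conj_mem _ hn.1 g, hSnormal.conj_mem _ hn.2 g⟩⟩
    exact this.subgroupOf S
  rcases hSsimple.eq_bot_or_eq_top_of_normal _ hMnormal with hbot | htop
  · -- N ∩ S = 1, so N centralizes S, so N = 1, contradicting b0
    exfalso
    apply hb0ne
    apply hScent
    intro s hs
    have hcS : b0 * s * b0⁻¹ * s⁻¹ ∈ S :=
      S.mul_mem (hSnormal.conj_mem s hs b0) (S.inv_mem hs)
    have hcN : b0 * s * b0⁻¹ * s⁻¹ ∈ N := by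
      have h1' : s * b0⁻¹ * s⁻¹ ∈ N := hNnormal.conj_mem _ (N.inv_mem hb0B) s
      have := N.mul_mem hb0B h1'
      simpa [mul_assoc] using this
    have : (⟨_, hcS⟩ : S) ∈ (N ⊓ S).subgroupOf S := by
      simp [Subgroup.mem_subgroupOf, hcN, hcS]
    rw [hbot] at this
    have hc1 : b0 * s * b0⁻¹ * s⁻¹ = 1 := by
      simpa [Subgroup.mem_bot] using this
    have : b0 * s * b0⁻¹ = s := by
      have := congrArg (· * s) hc1
      simpa [mul_assoc] using this
    calc b0 * s = b0 * s * b0⁻¹ * b0 := by group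
      _ = s * b0 := by rw [this]
  · -- S ≤ N, i.e. S ⊆ B
    intro s hs
    have : S ≤ N ⊓ S := (Subgroup.subgroupOf_eq_top).mp htop
    exact ((this hs).1 : s ∈ N)

end Aux

/-- the minimal block of `K` is the underlying set of a normal subgroup
of `G` containing `S` in which the centralizer of `S` is trivial (hence an almost
simple group with socle `S`). -/
theorem minBlock_is_almost_simple (G : Type*) [Group G] [Fintype G]
    (S : Subgroup G) (hSnormal : S.Normal) (hSsimple : IsSimpleGroup S)
    (hSnonabelian : ¬ ∀ a b : S, a * b = b * a)
    (hScent : ∀ g : G, (∀ s ∈ S, g * s = s * g) → g = 1)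
    (K : Subgroup (Equiv.Perm G)) (hGK : starGroup (⊤ : Subgroup G) ≤ K) :
    ∃ H : Subgroup G, (H : Set G) = minBlock K ∧ H.Normal ∧ S ≤ H ∧
      ∀ g ∈ H, (∀ s ∈ S, g * s = s * g) → g = 1 := by
  have key := fun (B : Set G) (hB : IsBlock K B) (h1 : (1 : G) ∈ B) (h2 : 2 ≤ B.ncard) =>
    block_facts S hSnormal hSsimple hScent K hGK B hB h1 h2
  have mem_iff : ∀ x : G, x ∈ minBlock K ↔
      ∀ B : Set G, IsBlock K B → (1 : G) ∈ B → 2 ≤ B.ncard → x ∈ B := by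
    intro x
    constructor
    · intro hx B hB h1 h2; exact hx B ⟨hB, h1, h2⟩
    · rintro hx B ⟨hB, h1, h2⟩; exact hx B hB h1 h2
  refine ⟨{ carrier := minBlock K
            one_mem' := ?_
            mul_mem' := ?_
            inv_mem' := ?_ }, rfl, ⟨?_⟩, ?_, ?_⟩
  case refine_2 => rw [mem_iff]; intro B _ h1 _; exact h1
  · intro a b ha hb
    rw [mem_iff] at ha hb ⊢
    intro B hB h1 h2
    exact (key B hB h1 h2).1 a (ha B hB h1 h2) b (hb B hB h1 h2)
  · intro a ha
    rw [mem_iff] at ha ⊢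
    intro B hB h1 h2
    exact (key B hB h1 h2).2.1 a (ha B hB h1 h2)
  · intro n hn g
    change n ∈ minBlock K at hn
    change g * n * g⁻¹ ∈ minBlock K
    rw [mem_iff] at hn ⊢
    intro B hB h1 h2
    exact (key B hB h1 h2).2.2.1 g n (hn B hB h1 h2)
  · intro s hs
    change s ∈ minBlock K
    rw [mem_iff]
    intro B hB h1 h2
    exact (key B hB h1 h2).2.2.2 hs
  · intro g _ hg
    exact hScent g hg
end

section
/- Let G be an almost simple group with socle S, let K be a permutation group with G* ≤ K ≤ Sym(G), let L be the minimal block of K, and let K_𝔏 be the subgroup of all elements of K that map each right coset of L to itself. Then for every right coset X of L, the permutation group on X induced by K_𝔏 is primitive (transitive with only trivial blocks) and contains every permutation of X of the form x ↦ l₁xl₂ with l₁, l₂ ∈ L. -/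
section StabAux

variable {G : Type*} [Group G] [Fintype G]

/-- The permutation `x ↦ a * x * b`. -/
private def Tp (a b : G) : Equiv.Perm G := (Equiv.mulLeft a).trans (Equiv.mulRight b)

@[simp] private lemma Tp_apply (a b x : G) : Tp a b x = a * x * b := rfl

private lemma Tp_mem {K : Subgroup (Equiv.Perm G)} (hGK : starGroup (⊤ : Subgroup G) ≤ K)
    (a b : G) : Tp a b ∈ K := by
  apply hGK
  refine ⟨(⟨a, Subgroup.mem_top a⟩, ⟨b⁻¹, Subgroup.mem_top b⁻¹⟩), ?_⟩
  ext x
  simp [biTransHom, Tp]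

private lemma block_structure
    (S : Subgroup G) (hSnormal : S.Normal) (hSsimple : IsSimpleGroup S)
    (hScent : ∀ g : G, (∀ s ∈ S, g * s = s * g) → g = 1)
    (K' : Subgroup (Equiv.Perm G)) (L₀ : Subgroup G)
    (hSL₀ : ∀ s ∈ S, s ∈ L₀)
    (B : Set G)
    (hblock : ∀ k ∈ K', (k : Equiv.Perm G) '' B = B ∨ ((k : Equiv.Perm G) '' B) ∩ B = ∅)
    (h1 : (1:G) ∈ B) (hcard : 2 ≤ B.ncard)
    (hlm : ∀ b ∈ B, Tp b 1 ∈ K')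
    (hcj : ∀ l ∈ L₀, Tp l l⁻¹ ∈ K') :
    (∀ a ∈ B, ∀ b ∈ B, a * b ∈ B) ∧ (∀ a ∈ B, a⁻¹ ∈ B) ∧
      (∀ b ∈ B, ∀ l ∈ L₀, l * b * l⁻¹ ∈ B) ∧ (∀ s ∈ S, s ∈ B) := by
  have himg : ∀ k ∈ K', k 1 ∈ B → (k : Equiv.Perm G) '' B = B := by
    intro k hk hk1
    rcases hblock k hk with h | h
    · exact h
    · exact absurd h (Set.Nonempty.ne_empty ⟨k 1, ⟨1, h1, rfl⟩, hk1⟩)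
  have hmul : ∀ a ∈ B, ∀ b ∈ B, a * b ∈ B := by
    intro a ha b hb
    have h := himg (Tp a 1) (hlm a ha) (by simpa using ha)
    have h2 : Tp a 1 b ∈ Tp a 1 '' B := Set.mem_image_of_mem _ hb
    rw [h] at h2
    simpa using h2
  have hinv : ∀ a ∈ B, a⁻¹ ∈ B := by
    intro a ha
    have h := himg (Tp a 1) (hlm a ha) (by simpa using ha)
    have h1' : (1:G) ∈ Tp a 1 '' B := by rw [h]; exact h1
    obtain ⟨x, hx, hx1⟩ := h1'
    have hxa : x = a⁻¹ := by
      have hax : a * x * 1 = 1 := hx1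
      rw [mul_one] at hax
      exact eq_inv_of_mul_eq_one_right hax
    exact hxa ▸ hx
  have hcjB : ∀ b ∈ B, ∀ l ∈ L₀, l * b * l⁻¹ ∈ B := by
    intro b hb l hl
    have h := himg (Tp l l⁻¹) (hcj l hl) (by simpa using h1)
    have h2 : Tp l l⁻¹ b ∈ Tp l l⁻¹ '' B := Set.mem_image_of_mem _ hb
    rw [h] at h2
    simpa using h2
  refine ⟨hmul, hinv, hcjB, ?_⟩
  haveI := hSsimple
  let P : Subgroup S :=
    { carrier := {s : S | (s : G) ∈ B}
      one_mem' := h1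
      mul_mem' := fun {a b} ha hb => hmul _ ha _ hb
      inv_mem' := fun {a} ha => hinv _ ha }
  have hPmem : ∀ s : S, s ∈ P ↔ (s : G) ∈ B := fun s => Iff.rfl
  have hPnormal : P.Normal := by
    refine ⟨fun n hn g => ?_⟩
    rw [hPmem] at hn ⊢
    exact hcjB _ hn _ (hSL₀ _ g.2)
  have hPne : P ≠ ⊥ := by
    intro hbot
    obtain ⟨a, ha, b, hb, hab⟩ := (Set.one_lt_ncard (Set.toFinite B)).mp hcard
    have hc : a⁻¹ * b ∈ B := hmul _ (hinv _ ha) _ hb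
    have hcne : a⁻¹ * b ≠ 1 := fun h => hab (inv_mul_eq_one.mp h)
    have hcomm : ∀ s ∈ S, (a⁻¹ * b) * s = s * (a⁻¹ * b) := by
      intro s hs
      have h1' : s * (a⁻¹ * b)⁻¹ * s⁻¹ ∈ B := hcjB _ (hinv _ hc) _ (hSL₀ s hs)
      have h2 : (a⁻¹ * b) * (s * (a⁻¹ * b)⁻¹ * s⁻¹) ∈ B := hmul _ hc _ h1'
      have h3 : (a⁻¹ * b) * (s * (a⁻¹ * b)⁻¹ * s⁻¹) ∈ S := by
        have h4 : (a⁻¹ * b) * s * (a⁻¹ * b)⁻¹ ∈ S := hSnormal.conj_mem s hs (a⁻¹ * b)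
        have h5 := S.mul_mem h4 (S.inv_mem hs)
        simpa [mul_assoc] using h5
      have h6 : (⟨_, h3⟩ : S) ∈ P := h2
      rw [hbot, Subgroup.mem_bot] at h6
      have h7 : (a⁻¹ * b) * (s * (a⁻¹ * b)⁻¹ * s⁻¹) = 1 := by
        exact congrArg Subtype.val h6
      have h8 : ((a⁻¹ * b) * s) * (s * (a⁻¹ * b))⁻¹ = 1 := by
        rw [mul_inv_rev]
        simpa [mul_assoc] using h7
      exact mul_inv_eq_one.mp h8
    exact hcne (hScent _ hcomm)
  rcases hPnormal.eq_bot_or_eq_top with h | h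
  · exact absurd h hPne
  · intro s hs
    have : (⟨s, hs⟩ : S) ∈ P := by rw [h]; exact Subgroup.mem_top _
    exact this

private lemma perm_apply_inv_self' (f : Equiv.Perm G) (x : G) : f (f⁻¹ x) = x :=
  f.apply_symm_apply x

private lemma perm_inv_apply_self' (f : Equiv.Perm G) (x : G) : f⁻¹ (f x) = x :=
  f.symm_apply_apply x

end StabAux

/-- the group induced by `K_𝔏` on each right coset of the minimal block
`L` is primitive and contains every permutation `x ↦ l₁ * x * l₂` with `l₁, l₂ ∈ L`. -/
theorem stabCosets_primitive_on_cosets (G : Type*) [Group G] [Fintype G]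
    (S : Subgroup G) (hSnormal : S.Normal) (hSsimple : IsSimpleGroup S)
    (hSnonabelian : ¬ ∀ a b : S, a * b = b * a)
    (hScent : ∀ g : G, (∀ s ∈ S, g * s = s * g) → g = 1)
    (K : Subgroup (Equiv.Perm G)) (hGK : starGroup (⊤ : Subgroup G) ≤ K)
    (L : Subgroup G) (hL : (L : Set G) = minBlock K) (g : G) :
    (∀ a ∈ rcoset L g, ∀ b ∈ rcoset L g, ∃ k ∈ stabCosets K L, (k : Equiv.Perm G) a = b) ∧
    (∀ B : Set G, B ⊆ rcoset L g →
      (∀ k ∈ stabCosets K L,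
        (k : Equiv.Perm G) '' B = B ∨ ((k : Equiv.Perm G) '' B) ∩ B = ∅) →
      B.Subsingleton ∨ B = rcoset L g) ∧
    (∀ l₁ ∈ L, ∀ l₂ ∈ L, ∃ k ∈ stabCosets K L,
      ∀ x ∈ rcoset L g, (k : Equiv.Perm G) x = l₁ * x * l₂) := by
  classical
  have hTK : ∀ a b : G, Tp a b ∈ K := fun a b => Tp_mem hGK a b
  set F : Set (Set G) := {B : Set G | IsBlock K B ∧ (1 : G) ∈ B ∧ 2 ≤ B.ncard} with hF
  have hmemL : ∀ x : G, x ∈ L ↔ ∀ B ∈ F, x ∈ B := by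
    intro x
    constructor
    · intro hx B hB
      have hx' : x ∈ (L : Set G) := hx
      rw [hL] at hx'
      exact hx' B hB
    · intro h
      show x ∈ (L : Set G)
      rw [hL]
      exact Set.mem_sInter.mpr h
  haveI := hSsimple
  obtain ⟨s₀', hs₀'⟩ := exists_ne (1 : S)
  obtain ⟨s₀, hs₀S⟩ := s₀'
  have hs₀ne : s₀ ≠ 1 := fun h => hs₀' (Subtype.ext h)
  have hFstruct : ∀ B ∈ F, (∀ a ∈ B, ∀ b ∈ B, a * b ∈ B) ∧ (∀ a ∈ B, a⁻¹ ∈ B) ∧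
      (∀ b ∈ B, ∀ l : G, l * b * l⁻¹ ∈ B) ∧ (∀ s ∈ S, s ∈ B) := by
    intro B hB
    obtain ⟨hBbl, hB1, hBc⟩ := hB
    have h := block_structure S hSnormal hSsimple hScent K ⊤ (fun s _ => Subgroup.mem_top s)
      B hBbl hB1 hBc (fun b _ => hTK b 1) (fun l _ => hTK l l⁻¹)
    exact ⟨h.1, h.2.1, fun b hb l => h.2.2.1 b hb l (Subgroup.mem_top l), h.2.2.2⟩
  have hLnormal : ∀ l ∈ L, ∀ a : G, a * l * a⁻¹ ∈ L := by
    intro l hl a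
    exact (hmemL _).mpr fun B hB => (hFstruct B hB).2.2.1 l ((hmemL l).mp hl B hB) a
  have hSL : ∀ s ∈ S, s ∈ L := fun s hs =>
    (hmemL s).mpr fun B hB => (hFstruct B hB).2.2.2 s hs
  have hblockL : ∀ k ∈ K, ∀ u : G, u ∈ L → k u ∈ L → ∀ y : G, (y ∈ L ↔ k y ∈ L) := by
    intro k hk u hu hku y
    have hBk : ∀ B ∈ F, k '' B = B := by
      intro B hB
      rcases hB.1 k hk with h | h
      · exact h
      · exact absurd h (Set.Nonempty.ne_empty
          ⟨k u, ⟨u, (hmemL u).mp hu B hB, rfl⟩, (hmemL _).mp hku B hB⟩)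
    constructor
    · intro hy
      refine (hmemL _).mpr fun B hB => ?_
      have h2 : k y ∈ k '' B := Set.mem_image_of_mem _ ((hmemL y).mp hy B hB)
      rwa [hBk B hB] at h2
    · intro hy
      refine (hmemL _).mpr fun B hB => ?_
      have h2 : k y ∈ k '' B := by rw [hBk B hB]; exact (hmemL _).mp hy B hB
      obtain ⟨z, hz, hzz⟩ := h2
      have hzy : z = y := k.injective hzz
      exact hzy ▸ hz
  have hcoset : ∀ k ∈ K, ∀ x y : G, (y * x⁻¹ ∈ L ↔ (k y) * (k x)⁻¹ ∈ L) := by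
    intro k hk x y
    have hk'K : Tp 1 (k x)⁻¹ * k * Tp 1 x ∈ K :=
      K.mul_mem (K.mul_mem (hTK 1 (k x)⁻¹) hk) (hTK 1 x)
    have hk'app : ∀ z, (Tp 1 (k x)⁻¹ * k * Tp 1 x) z = k (z * x) * (k x)⁻¹ := by
      intro z; simp [Tp, Equiv.Perm.mul_apply]
    have h1 : (Tp 1 (k x)⁻¹ * k * Tp 1 x) 1 = 1 := by rw [hk'app]; simp
    have h2 := hblockL _ hk'K 1 L.one_mem (by rw [h1]; exact L.one_mem) (y * x⁻¹)
    rw [hk'app] at h2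
    simpa [inv_mul_cancel_right] using h2
  have hstabnorm : ∀ k ∈ K, ∀ m ∈ stabCosets K L, k⁻¹ * m * k ∈ stabCosets K L := by
    intro k hk m hm
    refine ⟨K.mul_mem (K.mul_mem (K.inv_mem hk) hm.1) hk, fun x => ?_⟩
    have happ : (k⁻¹ * m * k) x = k⁻¹ (m (k x)) := by simp [Equiv.Perm.mul_apply]
    rw [happ]
    have h2 := hcoset k hk x (k⁻¹ (m (k x)))
    rw [perm_apply_inv_self'] at h2
    exact h2.mpr (hm.2 (k x))
  have hblockconj : ∀ ψ : Equiv.Perm G, ψ ∈ K → ∀ N : Set G,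
      (∀ m ∈ stabCosets K L, (m : Equiv.Perm G) '' N = N ∨
        ((m : Equiv.Perm G) '' N) ∩ N = ∅) →
      (∀ m ∈ stabCosets K L, (m : Equiv.Perm G) '' (ψ '' N) = ψ '' N ∨
        ((m : Equiv.Perm G) '' (ψ '' N)) ∩ (ψ '' N) = ∅) := by
    intro ψ hψ N hN m hm
    have key : (m : Equiv.Perm G) '' (ψ '' N) = ψ '' ((ψ⁻¹ * m * ψ) '' N) := by
      rw [Set.image_image, Set.image_image]
      apply Set.image_congr'
      intro x; simp [Equiv.Perm.mul_apply]
    rcases hN (ψ⁻¹ * m * ψ) (hstabnorm ψ hψ m hm) with h | h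
    · left; rw [key, h]
    · right; rw [key, ← Set.image_inter ψ.injective, h, Set.image_empty]
  refine ⟨?_, ?_, ?_⟩
  · -- transitivity on the coset
    intro a ha b hb
    have hba : b * a⁻¹ ∈ L := by
      have h1 : a * g⁻¹ ∈ L := ha
      have h2 : b * g⁻¹ ∈ L := hb
      have h3 := L.mul_mem h2 (L.inv_mem h1)
      simpa [mul_inv_rev, mul_assoc] using h3
    refine ⟨Tp (b * a⁻¹) 1, ⟨hTK _ _, fun x => by simpa using hba⟩, by simp⟩
  · -- primitivity
    intro B hBsub hBblock
    by_cases hss : B.Subsingleton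
    · exact Or.inl hss
    right
    rw [Set.not_subsingleton_iff] at hss
    obtain ⟨x₀, hx₀, x₁, hx₁, hne01⟩ := hss
    have hx₀g : x₀ * g⁻¹ ∈ L := hBsub hx₀
    have hρapp : ∀ z, Tp 1 x₀⁻¹ z = z * x₀⁻¹ := fun z => by simp
    set B' : Set G := (Tp 1 x₀⁻¹ : Equiv.Perm G) '' B with hB'def
    have hB'sub : B' ⊆ (L : Set G) := by
      rintro _ ⟨z, hz, rfl⟩
      rw [hρapp]
      have h1 : z * g⁻¹ ∈ L := hBsub hz
      have h2 := L.mul_mem h1 (L.inv_mem hx₀g)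
      show z * x₀⁻¹ ∈ L
      simpa [mul_inv_rev, mul_assoc] using h2
    have hB'block : ∀ m ∈ stabCosets K L, (m : Equiv.Perm G) '' B' = B' ∨
        ((m : Equiv.Perm G) '' B') ∩ B' = ∅ :=
      hblockconj (Tp 1 x₀⁻¹) (hTK 1 x₀⁻¹) B hBblock
    have hB'1 : (1 : G) ∈ B' := ⟨x₀, hx₀, by simp⟩
    have hB'card : 2 ≤ B'.ncard := by
      rw [hB'def, Set.ncard_image_of_injective _ (Equiv.injective _)]
      exact (Set.one_lt_ncard (Set.toFinite _)).mpr ⟨x₀, hx₀, x₁, hx₁, hne01⟩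
    set F' : Set (Set G) := {N : Set G | N ⊆ (L : Set G) ∧
      (∀ m ∈ stabCosets K L, (m : Equiv.Perm G) '' N = N ∨
        ((m : Equiv.Perm G) '' N) ∩ N = ∅) ∧ (1:G) ∈ N ∧ 2 ≤ N.ncard} with hF'
    have hB'F' : B' ∈ F' := ⟨hB'sub, hB'block, hB'1, hB'card⟩
    have hF'struct : ∀ N ∈ F', (∀ a ∈ N, ∀ b ∈ N, a * b ∈ N) ∧ (∀ a ∈ N, a⁻¹ ∈ N) ∧
        (∀ b ∈ N, ∀ l ∈ L, l * b * l⁻¹ ∈ N) ∧ (∀ s ∈ S, s ∈ N) := by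
      intro N hN
      obtain ⟨hNL, hNb, hN1, hNc⟩ := hN
      refine block_structure S hSnormal hSsimple hScent (stabCosets K L) L hSL N hNb hN1 hNc
        (fun b hb => ⟨hTK b 1, fun x => by simpa using hNL hb⟩)
        (fun l hl => ⟨hTK l l⁻¹, fun x => ?_⟩)
      have h2 := L.mul_mem hl (hLnormal l⁻¹ (L.inv_mem hl) x)
      simpa [mul_assoc] using h2
    set M : Set G := ⋂₀ F' with hM
    have hMsub : ∀ N ∈ F', M ⊆ N := fun N hN => Set.sInter_subset_of_mem hN
    have hSM : ∀ s ∈ S, s ∈ M :=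
      fun s hs => Set.mem_sInter.mpr fun N hN => (hF'struct N hN).2.2.2 s hs
    have h1M : (1:G) ∈ M := Set.mem_sInter.mpr fun N hN => hN.2.2.1
    have hML : M ⊆ (L : Set G) := (hMsub B' hB'F').trans hB'sub
    have hMmul : ∀ a ∈ M, ∀ b ∈ M, a * b ∈ M := fun a ha b hb =>
      Set.mem_sInter.mpr fun N hN =>
        (hF'struct N hN).1 a (Set.mem_sInter.mp ha N hN) b (Set.mem_sInter.mp hb N hN)
    have hMinv : ∀ a ∈ M, a⁻¹ ∈ M := fun a ha =>
      Set.mem_sInter.mpr fun N hN => (hF'struct N hN).2.1 a (Set.mem_sInter.mp ha N hN)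
    have hMcard : 2 ≤ M.ncard :=
      (Set.one_lt_ncard (Set.toFinite _)).mpr ⟨s₀, hSM s₀ hs₀S, 1, h1M, hs₀ne⟩
    have hMblock : IsBlock K M := by
      intro k hk
      by_cases hE : ((k : Equiv.Perm G) '' M) ∩ M = ∅
      · exact Or.inr hE
      left
      obtain ⟨z, ⟨u, huM, rfl⟩, hzM⟩ := Set.nonempty_iff_ne_empty.mpr hE
      have huL : u ∈ L := hML huM
      have hkuL : k u ∈ L := hML hzM
      have hh : k 1 ∈ L := by
        have h1 := (hcoset k hk u 1).mp (by simpa using L.inv_mem huL)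
        have h2 := L.mul_mem h1 hkuL
        simpa using h2
      have hφK : Tp 1 (k 1)⁻¹ * k ∈ K := K.mul_mem (hTK 1 (k 1)⁻¹) hk
      have hφapp : ∀ x, (Tp 1 (k 1)⁻¹ * k) x = k x * (k 1)⁻¹ := by
        intro x; simp [Tp, Equiv.Perm.mul_apply]
      have hφ1 : (Tp 1 (k 1)⁻¹ * k) 1 = 1 := by rw [hφapp]; simp
      have hφL : ∀ x : G, x ∈ L ↔ (Tp 1 (k 1)⁻¹ * k) x ∈ L := by
        intro x
        have h2 := hcoset k hk 1 x
        rw [hφapp]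
        simpa using h2
      have hφinv1 : (Tp 1 (k 1)⁻¹ * k)⁻¹ 1 = 1 := by
        have h2 : (Tp 1 (k 1)⁻¹ * k)⁻¹ ((Tp 1 (k 1)⁻¹ * k) 1) = 1 :=
          perm_inv_apply_self' _ 1
        rwa [hφ1] at h2
      have hφinvL : ∀ x : G, x ∈ L ↔ (Tp 1 (k 1)⁻¹ * k)⁻¹ x ∈ L := by
        intro x
        have h2 := hφL ((Tp 1 (k 1)⁻¹ * k)⁻¹ x)
        rw [perm_apply_inv_self'] at h2
        exact h2.symm
      have hmaps : ∀ ψ : Equiv.Perm G, ψ ∈ K → ψ 1 = 1 → (∀ x : G, x ∈ L ↔ ψ x ∈ L) →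
          ∀ N ∈ F', ψ '' N ∈ F' := by
        intro ψ hψ hψ1 hψL N hN
        obtain ⟨hNL, hNb, hN1, hNc⟩ := hN
        refine ⟨?_, hblockconj ψ hψ N hNb, ⟨1, hN1, hψ1⟩, ?_⟩
        · rintro _ ⟨w, hw, rfl⟩; exact (hψL w).mp (hNL hw)
        · rw [Set.ncard_image_of_injective _ ψ.injective]; exact hNc
      have hφM : ∀ x ∈ M, (Tp 1 (k 1)⁻¹ * k) x ∈ M := by
        intro x hx
        refine Set.mem_sInter.mpr fun N hN => ?_
        have hN' := hmaps _ (K.inv_mem hφK) hφinv1 hφinvL N hN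
        obtain ⟨n, hn, hnx⟩ := Set.mem_sInter.mp hx _ hN'
        have hh2 : (Tp 1 (k 1)⁻¹ * k) x = n := by
          rw [← hnx]; exact perm_apply_inv_self' _ n
        exact hh2 ▸ hn
      have hφinvM : ∀ x ∈ M, (Tp 1 (k 1)⁻¹ * k)⁻¹ x ∈ M := by
        intro x hx
        refine Set.mem_sInter.mpr fun N hN => ?_
        have hN' := hmaps _ hφK hφ1 hφL N hN
        obtain ⟨n, hn, hnx⟩ := Set.mem_sInter.mp hx _ hN'
        have hh2 : (Tp 1 (k 1)⁻¹ * k)⁻¹ x = n := by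
          rw [← hnx]; exact perm_inv_apply_self' _ n
        exact hh2 ▸ hn
      have hhM : k 1 ∈ M := by
        have h1 : (Tp 1 (k 1)⁻¹ * k) u ∈ M := hφM u huM
        have h2 : ((Tp 1 (k 1)⁻¹ * k) u)⁻¹ * (k u) ∈ M := hMmul _ (hMinv _ h1) _ hzM
        rw [hφapp] at h2
        simpa [mul_inv_rev, mul_assoc] using h2
      apply Set.Subset.antisymm
      · rintro _ ⟨x, hx, rfl⟩
        have heq : (Tp 1 (k 1)⁻¹ * k) x * k 1 = k x := by rw [hφapp]; simp
        exact heq ▸ hMmul _ (hφM x hx) _ hhM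
      · intro y hy
        refine ⟨(Tp 1 (k 1)⁻¹ * k)⁻¹ (y * (k 1)⁻¹), ?_, ?_⟩
        · exact hφinvM _ (hMmul _ hy _ (hMinv _ hhM))
        · have h4 := hφapp ((Tp 1 (k 1)⁻¹ * k)⁻¹ (y * (k 1)⁻¹))
          rw [perm_apply_inv_self'] at h4
          have h5 : k ((Tp 1 (k 1)⁻¹ * k)⁻¹ (y * (k 1)⁻¹)) = y := mul_right_cancel h4.symm
          exact h5
    have hMF : M ∈ F := ⟨hMblock, h1M, hMcard⟩
    have hLM : (L : Set G) ⊆ M := by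
      rw [hL]
      exact Set.sInter_subset_of_mem hMF
    have hB'L : B' = (L : Set G) :=
      Set.Subset.antisymm hB'sub (hLM.trans (hMsub B' hB'F'))
    apply Set.Subset.antisymm hBsub
    intro y hy
    have hyg : y * g⁻¹ ∈ L := hy
    have hyx : y * x₀⁻¹ ∈ L := by
      have h2 := L.mul_mem hyg (L.inv_mem hx₀g)
      simpa [mul_inv_rev, mul_assoc] using h2
    have hyB' : y * x₀⁻¹ ∈ B' := by rw [hB'L]; exact hyx
    obtain ⟨z, hz, hze⟩ := hyB'
    have hzy : z = y := by
      rw [hρapp] at hze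
      exact mul_right_cancel hze
    exact hzy ▸ hz
  · -- contains all bitranslations by L
    intro l₁ hl₁ l₂ hl₂
    refine ⟨Tp l₁ l₂, ⟨hTK _ _, fun x => ?_⟩, fun x _ => by simp⟩
    have h2 := L.mul_mem hl₁ (hLnormal l₂ hl₂ x)
    simpa [mul_assoc] using h2
end

section
/- Let G be a finite group with a normal subgroup S that is simple and nonabelian and whose centralizer in G is trivial (so G is almost simple with socle S). Then the normalizer in Sym(G) of the subgroup S* equals D(2,G). -/
/-! ### Auxiliary machinery for Statement 9 -/

theorem Equiv.Perm.apply_inv_self {α : Type*} (f : Equiv.Perm α) (x : α) : f (f⁻¹ x) = x :=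
  f.apply_symm_apply x

theorem Equiv.Perm.inv_apply_self {α : Type*} (f : Equiv.Perm α) (x : α) : f⁻¹ (f x) = x :=
  f.symm_apply_apply x

namespace Stmt9

variable {G : Type*} [Group G]

/-- Left translation by an element of `S`, as a homomorphism `S →* Perm G`. -/
def lhom (S : Subgroup G) : S →* Equiv.Perm G := (biTransHom S).comp (MonoidHom.inl S S)

/-- Inverse-right translation by an element of `S`, as a homomorphism `S →* Perm G`. -/
def rhom (S : Subgroup G) : S →* Equiv.Perm G := (biTransHom S).comp (MonoidHom.inr S S)

variable {S : Subgroup G}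

lemma lhom_apply (s : S) (x : G) : lhom S s x = s * x := by
  show (s : G) * x * ((1 : S) : G)⁻¹ = s * x
  simp

lemma rhom_apply (s : S) (x : G) : rhom S s x = x * (s : G)⁻¹ := by
  show ((1 : S) : G) * x * (s : G)⁻¹ = x * (s : G)⁻¹
  simp

lemma mem_star_iff {π : Equiv.Perm G} :
    π ∈ starGroup S ↔ ∃ a ∈ S, ∃ b ∈ S, ∀ x, π x = a * x * b⁻¹ := by
  constructor
  · rintro ⟨p, rfl⟩
    exact ⟨p.1, p.1.2, p.2, p.2.2, fun x => rfl⟩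
  · rintro ⟨a, ha, b, hb, h⟩
    exact ⟨(⟨a, ha⟩, ⟨b, hb⟩), Equiv.ext fun x => (h x).symm⟩

lemma mem_L_iff {π : Equiv.Perm G} :
    π ∈ (lhom S).range ↔ ∃ s ∈ S, ∀ x, π x = s * x := by
  constructor
  · rintro ⟨t, rfl⟩
    exact ⟨t, t.2, fun x => lhom_apply t x⟩
  · rintro ⟨s, hs, h⟩
    exact ⟨⟨s, hs⟩, Equiv.ext fun x => by rw [lhom_apply]; exact (h x).symm⟩

lemma mem_R_iff {π : Equiv.Perm G} :
    π ∈ (rhom S).range ↔ ∃ s ∈ S, ∀ x, π x = x * s⁻¹ := by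
  constructor
  · rintro ⟨t, rfl⟩
    exact ⟨t, t.2, fun x => rhom_apply t x⟩
  · rintro ⟨s, hs, h⟩
    exact ⟨⟨s, hs⟩, Equiv.ext fun x => by rw [rhom_apply]; exact (h x).symm⟩

lemma L_le_star : (lhom S).range ≤ starGroup S := by
  rintro π hπ
  rw [mem_L_iff] at hπ
  obtain ⟨s, hs, h⟩ := hπ
  exact mem_star_iff.mpr ⟨s, hs, 1, S.one_mem, fun x => by rw [h x]; group⟩

lemma R_le_star : (rhom S).range ≤ starGroup S := by
  rintro π hπ
  rw [mem_R_iff] at hπ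
  obtain ⟨s, hs, h⟩ := hπ
  exact mem_star_iff.mpr ⟨1, S.one_mem, s, hs, fun x => by rw [h x]; group⟩

lemma lhom_injective : Function.Injective (lhom S) := by
  intro s t h
  have := congrArg (fun (π : Equiv.Perm G) => π 1) h
  simp only [lhom_apply, mul_one] at this
  exact Subtype.ext this

lemma rhom_injective : Function.Injective (rhom S) := by
  intro s t h
  have := congrArg (fun (π : Equiv.Perm G) => π 1) h
  simp only [rhom_apply, one_mul] at this
  exact Subtype.ext (inv_injective this)

lemma card_L : Nat.card (lhom S).range = Nat.card S :=
  (Nat.card_congr (MonoidHom.ofInjective (lhom_injective (S := S))).toEquiv).symm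

lemma card_R : Nat.card (rhom S).range = Nat.card S :=
  (Nat.card_congr (MonoidHom.ofInjective (rhom_injective (S := S))).toEquiv).symm

/-- The inverse of the permutation `x ↦ a x b⁻¹` is `x ↦ a⁻¹ x b`. -/
lemma inv_apply_of_forall {k : Equiv.Perm G} {a b : G} (h : ∀ x, k x = a * x * b⁻¹) (x : G) :
    k⁻¹ x = a⁻¹ * x * b := by
  apply k.injective
  rw [Equiv.Perm.apply_inv_self, h]
  group

/-- `L` is normal in `S*`. -/
lemma L_conj (t : Equiv.Perm G) (ht : t ∈ starGroup S) (l : Equiv.Perm G)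
    (hl : l ∈ (lhom S).range) : t * l * t⁻¹ ∈ (lhom S).range := by
  rw [mem_star_iff] at ht
  obtain ⟨a, ha, b, hb, hT⟩ := ht
  rw [mem_L_iff] at hl ⊢
  obtain ⟨s, hs, hL⟩ := hl
  refine ⟨a * s * a⁻¹, S.mul_mem (S.mul_mem ha hs) (S.inv_mem ha), fun x => ?_⟩
  have hinv := inv_apply_of_forall hT
  simp only [Equiv.Perm.mul_apply, hinv, hL, hT]
  group

/-- `R` is normal in `S*`. -/
lemma R_conj (t : Equiv.Perm G) (ht : t ∈ starGroup S) (r : Equiv.Perm G)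
    (hr : r ∈ (rhom S).range) : t * r * t⁻¹ ∈ (rhom S).range := by
  rw [mem_star_iff] at ht
  obtain ⟨a, ha, b, hb, hT⟩ := ht
  rw [mem_R_iff] at hr ⊢
  obtain ⟨s, hs, hR⟩ := hr
  refine ⟨b * s * b⁻¹, S.mul_mem (S.mul_mem hb hs) (S.inv_mem hb), fun x => ?_⟩
  have hinv := inv_apply_of_forall hT
  simp only [Equiv.Perm.mul_apply, hinv, hR, hT]
  group

/-- A multiplicative permutation maps `S` onto `S` (i.e. `S` is characteristic). -/
lemma apply_mem_of_mult [Finite G] (hSnormal : S.Normal)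
    (hScent : ∀ g : G, (∀ s ∈ S, g * s = s * g) → g = 1) (hSsimple : IsSimpleGroup S)
    (α : Equiv.Perm G) (hm : ∀ x y : G, α (x * y) = α x * α y) :
    ∀ s ∈ S, α s ∈ S := by
  classical
  set αh : G →* G := MonoidHom.mk' α hm with hαh
  have hα1 : α 1 = 1 := αh.map_one
  set T : Subgroup G := S.map αh with hT
  have hTN : T.Normal := hSnormal.map αh α.surjective
  have hTS : (T ⊓ S).Normal := @Subgroup.normal_inf_normal _ _ T S hTN hSnormal
  set M : Subgroup S := (T ⊓ S).comap S.subtype with hM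
  have hMN : M.Normal := hTS.comap S.subtype
  have hsub : ∀ s ∈ S, α s ∈ T := fun s hs => ⟨s, hs, rfl⟩
  rcases hSsimple.eq_bot_or_eq_top_of_normal M hMN with hbot | htop
  · -- impossible: T would centralize S
    exfalso
    have hT1 : ∀ g ∈ T, g = 1 := by
      intro g hg
      apply hScent
      intro s hs
      have hc1 : g⁻¹ * s⁻¹ * g * s ∈ T := by
        have h1 : s⁻¹ * g * s ∈ T := by
          have := hTN.conj_mem g hg s⁻¹
          simpa using this
        have := T.mul_mem (T.inv_mem hg) h1
        simpa [mul_assoc] using this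
      have hc2 : g⁻¹ * s⁻¹ * g * s ∈ S := by
        have h1 : g⁻¹ * s⁻¹ * g ∈ S := by
          have := hSnormal.conj_mem s⁻¹ (S.inv_mem hs) g⁻¹
          simpa [mul_assoc] using this
        exact S.mul_mem h1 hs
      have : (⟨g⁻¹ * s⁻¹ * g * s, hc2⟩ : S) ∈ M := by
        simp only [hM, Subgroup.mem_comap, Subgroup.coe_subtype, Subgroup.mem_inf]
        exact ⟨hc1, hc2⟩
      rw [hbot, Subgroup.mem_bot] at this
      have h1 : g⁻¹ * s⁻¹ * g * s = 1 := congrArg Subtype.val this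
      have h2 : g * s = s * g := by
        have := congrArg (fun y => s * g * y) h1
        simpa [mul_assoc] using this
      exact h2
    obtain ⟨s₀, hs₀⟩ := exists_ne (1 : S)
    have : α (s₀ : G) = 1 := hT1 _ (hsub s₀ s₀.2)
    have : (s₀ : G) = 1 := α.injective (by rw [this, hα1])
    exact hs₀ (Subtype.ext this)
  · -- S ≤ T, hence S = T by cardinality
    have hST : S ≤ T := by
      intro s hs
      have : (⟨s, hs⟩ : S) ∈ M := htop ▸ Subgroup.mem_top _
      simp only [hM, Subgroup.mem_comap, Subgroup.coe_subtype, Subgroup.mem_inf] at this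
      exact this.1
    have hcard : Nat.card T ≤ Nat.card S := by
      have : Nat.card T = Nat.card S :=
        (Nat.card_congr (S.equivMapOfInjective αh α.injective).toEquiv).symm
      omega
    have hTeq : S = T := Subgroup.eq_of_le_of_card_ge hST hcard
    intro s hs
    have : α s ∈ T := hsub s hs
    rwa [← hTeq] at this

/-- A multiplicative permutation lies in the holomorph. -/
lemma mult_mem_Hol (α : Equiv.Perm G) (hm : ∀ x y : G, α (x * y) = α x * α y) :
    α ∈ Hol G := by
  have hminv : ∀ x y : G, α⁻¹ (x * y) = α⁻¹ x * α⁻¹ y := by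
    intro x y
    apply α.injective
    rw [hm, Equiv.Perm.apply_inv_self, Equiv.Perm.apply_inv_self, Equiv.Perm.apply_inv_self]
  have key : ∀ (β : Equiv.Perm G), (∀ x y : G, β (x * y) = β x * β y) →
      ∀ g : Gᵐᵒᵖ, β * MulAction.toPermHom Gᵐᵒᵖ G g * β⁻¹ =
        MulAction.toPermHom Gᵐᵒᵖ G (MulOpposite.op (β g.unop)) := by
    intro β hβ g
    ext x
    show β (β⁻¹ x * g.unop) = x * β g.unop
    rw [hβ, Equiv.Perm.apply_inv_self]
  rw [Hol, Subgroup.mem_normalizer_iff]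
  intro h
  constructor
  · rintro ⟨g, rfl⟩
    exact ⟨MulOpposite.op (α g.unop), (key α hm g).symm⟩
  · rintro ⟨g, hg⟩
    have : h = α⁻¹ * MulAction.toPermHom Gᵐᵒᵖ G g * (α⁻¹)⁻¹ := by
      rw [inv_inv, hg]; group
    rw [this, key α⁻¹ hminv g]
    exact ⟨_, rfl⟩

/-- A multiplicative permutation normalizes `S*`. -/
lemma mult_mem_normalizer [Finite G] (hSnormal : S.Normal)
    (hScent : ∀ g : G, (∀ s ∈ S, g * s = s * g) → g = 1) (hSsimple : IsSimpleGroup S)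
    (α : Equiv.Perm G) (hm : ∀ x y : G, α (x * y) = α x * α y) :
    α ∈ Subgroup.normalizer (starGroup S : Set (Equiv.Perm G)) := by
  have hminv : ∀ x y : G, α⁻¹ (x * y) = α⁻¹ x * α⁻¹ y := by
    intro x y
    apply α.injective
    rw [hm, Equiv.Perm.apply_inv_self, Equiv.Perm.apply_inv_self, Equiv.Perm.apply_inv_self]
  have key : ∀ (β : Equiv.Perm G), (∀ x y : G, β (x * y) = β x * β y) →
      ∀ π ∈ starGroup S, β * π * β⁻¹ ∈ starGroup S := by
    intro β hβ π hπ
    have hβ1 : β 1 = 1 := (MonoidHom.mk' β hβ).map_one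
    have hβinvmem : ∀ x : G, β (x⁻¹) = (β x)⁻¹ := fun x => (MonoidHom.mk' β hβ).map_inv x
    rw [mem_star_iff] at hπ ⊢
    obtain ⟨a, ha, b, hb, h⟩ := hπ
    refine ⟨β a, apply_mem_of_mult hSnormal hScent hSsimple β hβ a ha,
      β b, apply_mem_of_mult hSnormal hScent hSsimple β hβ b hb, fun x => ?_⟩
    show β (π (β⁻¹ x)) = β a * x * (β b)⁻¹
    rw [h, hβ, hβ, hβinvmem, Equiv.Perm.apply_inv_self]
  rw [Subgroup.mem_normalizer_iff]
  intro π
  constructor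
  · exact fun h => key α hm π h
  · intro h
    have := key α⁻¹ hminv _ h
    have heq : α⁻¹ * (α * π * α⁻¹) * (α⁻¹)⁻¹ = π := by group
    rwa [heq] at this

/-- Right translations normalize `S*`. -/
lemma rmul_mem_normalizer (hSnormal : S.Normal) (c : G) :
    (Equiv.mulRight c : Equiv.Perm G) ∈ Subgroup.normalizer (starGroup S : Set (Equiv.Perm G)) := by
  have hinv : ∀ d : G, (Equiv.mulRight d : Equiv.Perm G)⁻¹ = Equiv.mulRight d⁻¹ := by
    intro d
    rw [Equiv.Perm.inv_def, Equiv.mulRight_symm]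
  have key : ∀ (d : G), ∀ π ∈ starGroup S,
      (Equiv.mulRight d : Equiv.Perm G) * π * (Equiv.mulRight d : Equiv.Perm G)⁻¹ ∈
        starGroup S := by
    intro d π hπ
    rw [mem_star_iff] at hπ ⊢
    obtain ⟨a, ha, b, hb, h⟩ := hπ
    have hbd : d⁻¹ * b * d ∈ S := by
      have := hSnormal.conj_mem b hb d⁻¹
      simpa using this
    refine ⟨a, ha, d⁻¹ * b * d, hbd, fun x => ?_⟩
    rw [hinv]
    show (π ((Equiv.mulRight d⁻¹) x)) * d = a * x * (d⁻¹ * b * d)⁻¹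
    rw [Equiv.coe_mulRight, h]
    group
  rw [Subgroup.mem_normalizer_iff]
  intro π
  constructor
  · exact fun h => key c π h
  · intro h
    have := key c⁻¹ _ h
    rw [← hinv] at this
    have heq : (Equiv.mulRight c : Equiv.Perm G)⁻¹ * (Equiv.mulRight c * π * (Equiv.mulRight c)⁻¹) *
        ((Equiv.mulRight c : Equiv.Perm G)⁻¹)⁻¹ = π := by group
    rwa [heq] at this

/-- Inversion normalizes `S*`. -/
lemma sigma_mem_normalizer :
    (Equiv.inv G : Equiv.Perm G) ∈ Subgroup.normalizer (starGroup S : Set (Equiv.Perm G)) := by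
  have hσσ : (Equiv.inv G : Equiv.Perm G)⁻¹ = Equiv.inv G := by
    rw [Equiv.Perm.inv_def, Equiv.inv_symm]
  have key : ∀ π ∈ starGroup S,
      (Equiv.inv G : Equiv.Perm G) * π * (Equiv.inv G : Equiv.Perm G)⁻¹ ∈ starGroup S := by
    intro π hπ
    rw [mem_star_iff] at hπ ⊢
    obtain ⟨a, ha, b, hb, h⟩ := hπ
    refine ⟨b, hb, a, ha, fun x => ?_⟩
    rw [hσσ]
    show (π (x⁻¹))⁻¹ = b * x * a⁻¹
    rw [h]
    group
  rw [Subgroup.mem_normalizer_iff]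
  intro π
  constructor
  · exact fun h => key π h
  · intro h
    have h2 := key _ h
    have heq : (Equiv.inv G : Equiv.Perm G) * (Equiv.inv G * π * (Equiv.inv G)⁻¹) *
        (Equiv.inv G : Equiv.Perm G)⁻¹ = π := by
      rw [hσσ]
      ext x
      simp
    rwa [heq] at h2

/-- `D(2,G)` is contained in the normalizer of `S*`. -/
lemma D2_le_normalizer [Finite G] (hSnormal : S.Normal)
    (hScent : ∀ g : G, (∀ s ∈ S, g * s = s * g) → g = 1) (hSsimple : IsSimpleGroup S) :
    D2 G ≤ Subgroup.normalizer (starGroup S : Set (Equiv.Perm G)) := by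
  rw [D2]
  apply sup_le
  · -- Hol G ≤ normalizer
    intro f hf
    set c : G := f 1 with hc
    set α : Equiv.Perm G := (Equiv.mulRight c⁻¹ : Equiv.Perm G) * f with hα
    have hαapp : ∀ x : G, α x = f x * c⁻¹ := fun x => rfl
    have hfmul : ∀ g : G, ∃ u : G, ∀ x, f (x * g) = f x * u := by
      intro g
      obtain ⟨h, hh⟩ := (Subgroup.mem_normalizer_iff.mp hf _).mp
        (⟨MulOpposite.op g, rfl⟩ :
          MulAction.toPermHom Gᵐᵒᵖ G (MulOpposite.op g) ∈ (rightMuls G : Set (Equiv.Perm G)))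
      refine ⟨h.unop, fun x => ?_⟩
      have h1 := congrArg (fun (π : Equiv.Perm G) => π (f x)) hh
      calc f (x * g) = f (f⁻¹ (f x) * g) := by rw [Equiv.Perm.inv_apply_self]
        _ = (f * MulAction.toPermHom Gᵐᵒᵖ G (MulOpposite.op g) * f⁻¹) (f x) := rfl
        _ = MulAction.toPermHom Gᵐᵒᵖ G h (f x) := h1.symm
        _ = f x * h.unop := rfl
    have hu : ∀ g x : G, f (x * g) = f x * (c⁻¹ * f g) := by
      intro g
      obtain ⟨u, hug⟩ := hfmul g
      have hgu : f g = c * u := by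
        have := hug 1
        rwa [one_mul] at this
      intro x
      rw [hug x, hgu]
      group
    have hαmul : ∀ x y : G, α (x * y) = α x * α y := by
      intro x y
      show f (x * y) * c⁻¹ = (f x * c⁻¹) * (f y * c⁻¹)
      rw [hu y x]
      group
    have hfdecomp : f = (Equiv.mulRight c : Equiv.Perm G) * α := by
      ext x
      show f x = α x * c
      rw [hαapp]
      group
    rw [hfdecomp]
    exact Subgroup.mul_mem _ (rmul_mem_normalizer hSnormal c)
      (mult_mem_normalizer hSnormal hScent hSsimple α hαmul)
  · rw [Subgroup.closure_le]
    intro x hx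
    rw [Set.mem_singleton_iff] at hx
    subst hx
    exact sigma_mem_normalizer


/-- `L ≠ R`. -/
lemma L_ne_R (hScent : ∀ g : G, (∀ s ∈ S, g * s = s * g) → g = 1)
    (hSsimple : IsSimpleGroup S) : (lhom S).range ≠ (rhom S).range := by
  intro h
  haveI := hSsimple.toNontrivial
  obtain ⟨s₀, hs₀⟩ := exists_ne (1 : S)
  have hmem : lhom S s₀ ∈ (rhom S).range := h ▸ ⟨s₀, rfl⟩
  obtain ⟨u, huS, hu⟩ := mem_R_iff.mp hmem
  have h1 : (s₀ : G) = u⁻¹ := by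
    have := hu 1
    rwa [lhom_apply, mul_one, one_mul] at this
  have hcomm : ∀ x : G, (s₀ : G) * x = x * (s₀ : G) := by
    intro x
    have := hu x
    rw [lhom_apply, ← h1] at this
    rw [this]
  have : (s₀ : G) = 1 := hScent _ (fun s _ => hcomm s)
  exact hs₀ (Subtype.ext this)

/-- Classification of nontrivial normal subgroups of `S*` of cardinality at most `|S|`. -/
lemma classify [Finite G] (hScent : ∀ g : G, (∀ s ∈ S, g * s = s * g) → g = 1)
    (hSsimple : IsSimpleGroup S) (K : Subgroup (Equiv.Perm G))
    (hle : K ≤ starGroup S)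
    (hnormal : ∀ k ∈ K, ∀ t ∈ starGroup S, t * k * t⁻¹ ∈ K)
    (hcard : Nat.card K ≤ Nat.card S)
    (hne : K ≠ ⊥) :
    K = (lhom S).range ∨ K = (rhom S).range := by
  by_cases hL : ∃ k ∈ K, k ≠ 1 ∧ k ∈ (lhom S).range
  · left
    obtain ⟨k, hkK, hk1, hkL⟩ := hL
    set M : Subgroup S := K.comap (lhom S) with hM
    have hMN : M.Normal := by
      constructor
      intro m hm t
      have h1 : lhom S (t * m * t⁻¹) = lhom S t * lhom S m * (lhom S t)⁻¹ := by
        rw [map_mul, map_mul, map_inv]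
      rw [hM, Subgroup.mem_comap] at hm ⊢
      rw [h1]
      exact hnormal _ hm _ (L_le_star ⟨t, rfl⟩)
    have hMne : M ≠ ⊥ := by
      obtain ⟨s₀, rfl⟩ := hkL
      intro hb
      have hmem : s₀ ∈ M := Subgroup.mem_comap.mpr hkK
      rw [hb, Subgroup.mem_bot] at hmem
      apply hk1
      rw [hmem, map_one]
    rcases hSsimple.eq_bot_or_eq_top_of_normal M hMN with hb | ht
    · exact absurd hb hMne
    · have hLK : (lhom S).range ≤ K := by
        rintro π ⟨s, rfl⟩
        have : s ∈ M := ht ▸ Subgroup.mem_top s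
        exact Subgroup.mem_comap.mp this
      exact (Subgroup.eq_of_le_of_card_ge hLK (by rw [card_L]; exact hcard)).symm
  · by_cases hR : ∃ k ∈ K, k ≠ 1 ∧ k ∈ (rhom S).range
    · right
      obtain ⟨k, hkK, hk1, hkR⟩ := hR
      set M : Subgroup S := K.comap (rhom S) with hM
      have hMN : M.Normal := by
        constructor
        intro m hm t
        have h1 : rhom S (t * m * t⁻¹) = rhom S t * rhom S m * (rhom S t)⁻¹ := by
          rw [map_mul, map_mul, map_inv]
        rw [hM, Subgroup.mem_comap] at hm ⊢
        rw [h1]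
        exact hnormal _ hm _ (R_le_star ⟨t, rfl⟩)
      have hMne : M ≠ ⊥ := by
        obtain ⟨s₀, rfl⟩ := hkR
        intro hb
        have hmem : s₀ ∈ M := Subgroup.mem_comap.mpr hkK
        rw [hb, Subgroup.mem_bot] at hmem
        apply hk1
        rw [hmem, map_one]
      rcases hSsimple.eq_bot_or_eq_top_of_normal M hMN with hb | ht
      · exact absurd hb hMne
      · have hRK : (rhom S).range ≤ K := by
          rintro π ⟨s, rfl⟩
          have : s ∈ M := ht ▸ Subgroup.mem_top s
          exact Subgroup.mem_comap.mp this
        exact (Subgroup.eq_of_le_of_card_ge hRK (by rw [card_R]; exact hcard)).symm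
    · exfalso
      apply hne
      rw [Subgroup.eq_bot_iff_forall]
      intro k hkK
      push_neg at hL hR
      obtain ⟨a, ha, b, hb, hk⟩ := mem_star_iff.mp (hle hkK)
      have hkinv := inv_apply_of_forall hk
      -- first coordinate
      have haS : ∀ s ∈ S, a * s = s * a := by
        intro s hs
        set w : Equiv.Perm G :=
          lhom S ⟨s, hs⟩ * k * (lhom S ⟨s, hs⟩)⁻¹ * k⁻¹ with hw
        have hwK : w ∈ K :=
          K.mul_mem (hnormal k hkK _ (L_le_star ⟨⟨s, hs⟩, rfl⟩)) (K.inv_mem hkK)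
        have hwpt : ∀ x, w x = (s * (a * s⁻¹ * a⁻¹)) * x := by
          intro x
          have hlinv : (lhom S ⟨s, hs⟩)⁻¹ = lhom S ⟨s, hs⟩⁻¹ := (map_inv _ _).symm
          rw [hw]
          simp only [Equiv.Perm.mul_apply, hkinv, hlinv, lhom_apply, hk,
            InvMemClass.coe_inv]
          group
        have hwL : w ∈ (lhom S).range :=
          mem_L_iff.mpr ⟨s * (a * s⁻¹ * a⁻¹),
            S.mul_mem hs (S.mul_mem (S.mul_mem ha (S.inv_mem hs)) (S.inv_mem ha)), hwpt⟩
        have hw1 : w = 1 := by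
          by_contra hne1
          exact hL w hwK hne1 hwL
        have hu1 : s * (a * s⁻¹ * a⁻¹) = 1 := by
          have := congrArg (fun (π : Equiv.Perm G) => π 1) hw1
          simp only [Equiv.Perm.one_apply] at this
          rw [hwpt 1, mul_one] at this
          exact this
        have := congrArg (fun y => y * (a * s)) hu1
        simp only [one_mul] at this
        calc a * s = (s * (a * s⁻¹ * a⁻¹)) * (a * s) := by rw [hu1]; group
          _ = s * a := by group
      have ha1 : a = 1 := hScent a haS
      -- second coordinate
      have hbS : ∀ s ∈ S, b * s = s * b := by
        intro s hs
        set w : Equiv.Perm G :=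
          rhom S ⟨s, hs⟩ * k * (rhom S ⟨s, hs⟩)⁻¹ * k⁻¹ with hw
        have hwK : w ∈ K :=
          K.mul_mem (hnormal k hkK _ (R_le_star ⟨⟨s, hs⟩, rfl⟩)) (K.inv_mem hkK)
        have hwpt : ∀ x, w x = x * (b * s * b⁻¹ * s⁻¹) := by
          intro x
          have hrinv : (rhom S ⟨s, hs⟩)⁻¹ = rhom S ⟨s, hs⟩⁻¹ := (map_inv _ _).symm
          rw [hw]
          simp only [Equiv.Perm.mul_apply, hkinv, hrinv, rhom_apply, hk,
            InvMemClass.coe_inv]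
          group
        have hwR : w ∈ (rhom S).range := by
          refine mem_R_iff.mpr ⟨s * b * s⁻¹ * b⁻¹,
            S.mul_mem (S.mul_mem (S.mul_mem hs hb) (S.inv_mem hs)) (S.inv_mem hb),
            fun x => ?_⟩
          rw [hwpt x]
          group
        have hw1 : w = 1 := by
          by_contra hne1
          exact hR w hwK hne1 hwR
        have hu1 : b * s * b⁻¹ * s⁻¹ = 1 := by
          have := congrArg (fun (π : Equiv.Perm G) => π 1) hw1
          simp only [Equiv.Perm.one_apply] at this
          rw [hwpt 1, one_mul] at this
          exact this
        calc b * s = (b * s * b⁻¹ * s⁻¹) * (s * b) := by group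
          _ = s * b := by rw [hu1]; group
      have hb1 : b = 1 := hScent b hbS
      ext x
      rw [hk x, ha1, hb1]
      simp

/-- Pointwise normalization conditions give multiplicativity. -/
lemma mult_of_pointwise (hSnormal : S.Normal)
    (hScent : ∀ g : G, (∀ s ∈ S, g * s = s * g) → g = 1)
    (f : Equiv.Perm G) (hf1 : f 1 = 1)
    (hR : ∀ s ∈ S, ∃ t ∈ S, ∀ x, f (x * s) = f x * t)
    (hL : ∀ s ∈ S, ∃ t ∈ S, ∀ x, f (s * x) = t * f x)
    (hSinv : ∀ s ∈ S, f⁻¹ s ∈ S) :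
    ∀ x y : G, f (x * y) = f x * f y := by
  have hfR : ∀ s ∈ S, ∀ x, f (x * s) = f x * f s := by
    intro s hs
    obtain ⟨t, _, h⟩ := hR s hs
    have h1 := h 1
    rw [one_mul, hf1, one_mul] at h1
    intro x
    rw [h x, h1]
  have hfL : ∀ s ∈ S, ∀ x, f (s * x) = f s * f x := by
    intro s hs
    obtain ⟨t, _, h⟩ := hL s hs
    have h1 := h 1
    rw [mul_one, hf1, mul_one] at h1
    intro x
    rw [h x, h1]
  have hconj : ∀ s ∈ S, ∀ x : G, f (x⁻¹ * s * x) = (f x)⁻¹ * f s * f x := by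
    intro s hs x
    have hmem : x⁻¹ * s * x ∈ S := by
      have := hSnormal.conj_mem s hs x⁻¹
      simpa using this
    have e2 : f (s * x) = f x * f (x⁻¹ * s * x) := by
      have h0 : s * x = x * (x⁻¹ * s * x) := by group
      rw [h0, hfR _ hmem x]
    have e3 : f x * f (x⁻¹ * s * x) = f s * f x := by rw [← e2, hfL s hs x]
    calc f (x⁻¹ * s * x) = (f x)⁻¹ * (f x * f (x⁻¹ * s * x)) := by group
      _ = (f x)⁻¹ * (f s * f x) := by rw [e3]
      _ = (f x)⁻¹ * f s * f x := by group
  intro x y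
  have hcomm : ∀ t ∈ S,
      (f (x * y) * (f x * f y)⁻¹) * t = t * (f (x * y) * (f x * f y)⁻¹) := by
    intro t ht
    obtain ⟨s, hsS, hfs⟩ : ∃ s ∈ S, f s = t :=
      ⟨f⁻¹ t, hSinv t ht, Equiv.Perm.apply_inv_self f t⟩
    have hxs : x⁻¹ * s * x ∈ S := by
      have := hSnormal.conj_mem s hsS x⁻¹
      simpa using this
    have A := hconj s hsS (x * y)
    have B : f ((x * y)⁻¹ * s * (x * y)) = (f y)⁻¹ * ((f x)⁻¹ * f s * f x) * f y := by
      have h1 : (x * y)⁻¹ * s * (x * y) = y⁻¹ * (x⁻¹ * s * x) * y := by group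
      rw [h1, hconj _ hxs y, hconj s hsS x]
    rw [A, hfs] at B
    have B' : (f (x * y))⁻¹ * t * f (x * y) = (f x * f y)⁻¹ * t * (f x * f y) := by
      rw [B]
      group
    calc f (x * y) * (f x * f y)⁻¹ * t
        = f (x * y) * ((f x * f y)⁻¹ * t * (f x * f y)) * (f x * f y)⁻¹ := by group
      _ = f (x * y) * ((f (x * y))⁻¹ * t * f (x * y)) * (f x * f y)⁻¹ := by rw [B']
      _ = t * (f (x * y) * (f x * f y)⁻¹) := by group
  have hd := hScent _ hcomm
  have := mul_inv_eq_one.mp hd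
  exact this

/-- If `f` fixes `1` and normalizes both `L` and `R`, then `f ∈ Hol G ≤ D2 G`. -/
lemma case_done [Finite G] (hSnormal : S.Normal)
    (hScent : ∀ g : G, (∀ s ∈ S, g * s = s * g) → g = 1)
    (f : Equiv.Perm G) (hf1 : f 1 = 1)
    (hKL : Subgroup.map (MulAut.conj f).toMonoidHom (lhom S).range = (lhom S).range)
    (hKR : Subgroup.map (MulAut.conj f).toMonoidHom (rhom S).range = (rhom S).range) :
    f ∈ D2 G := by
  have hfinv1 : f⁻¹ (1 : G) = 1 := by
    apply f.injective
    rw [Equiv.Perm.apply_inv_self, hf1]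
  have hR : ∀ s ∈ S, ∃ t ∈ S, ∀ x, f (x * s) = f x * t := by
    intro s hs
    have hmem : f * rhom S ⟨s⁻¹, S.inv_mem hs⟩ * f⁻¹ ∈ (rhom S).range := by
      rw [← hKR]
      exact ⟨rhom S ⟨s⁻¹, S.inv_mem hs⟩, ⟨_, rfl⟩, rfl⟩
    obtain ⟨u, huS, hu⟩ := mem_R_iff.mp hmem
    refine ⟨u⁻¹, S.inv_mem huS, fun x => ?_⟩
    have h2 : (f * rhom S ⟨s⁻¹, S.inv_mem hs⟩ * f⁻¹) (f x) = f (x * s) := by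
      show f ((rhom S ⟨s⁻¹, S.inv_mem hs⟩) (f⁻¹ (f x))) = f (x * s)
      rw [Equiv.Perm.inv_apply_self, rhom_apply]
      simp
    have h3 := hu (f x)
    rw [h2] at h3
    exact h3
  have hL : ∀ s ∈ S, ∃ t ∈ S, ∀ x, f (s * x) = t * f x := by
    intro s hs
    have hmem : f * lhom S ⟨s, hs⟩ * f⁻¹ ∈ (lhom S).range := by
      rw [← hKL]
      exact ⟨lhom S ⟨s, hs⟩, ⟨_, rfl⟩, rfl⟩
    obtain ⟨u, huS, hu⟩ := mem_L_iff.mp hmem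
    refine ⟨u, huS, fun x => ?_⟩
    have h2 : (f * lhom S ⟨s, hs⟩ * f⁻¹) (f x) = f (s * x) := by
      show f ((lhom S ⟨s, hs⟩) (f⁻¹ (f x))) = f (s * x)
      rw [Equiv.Perm.inv_apply_self, lhom_apply]
    have h3 := hu (f x)
    rw [h2] at h3
    exact h3
  have hSinv : ∀ s ∈ S, f⁻¹ s ∈ S := by
    intro s hs
    have hmem : rhom S ⟨s⁻¹, S.inv_mem hs⟩ ∈
        Subgroup.map (MulAut.conj f).toMonoidHom (rhom S).range := by
      rw [hKR]
      exact ⟨_, rfl⟩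
    obtain ⟨r₀, hr₀, hr⟩ := hmem
    obtain ⟨u, huS, hu⟩ := mem_R_iff.mp hr₀
    have lhs : ((MulAut.conj f).toMonoidHom r₀) (1 : G) = f u⁻¹ := by
      show f (r₀ (f⁻¹ 1)) = f u⁻¹
      rw [hfinv1, hu, one_mul]
    have rhs : (rhom S ⟨s⁻¹, S.inv_mem hs⟩ : Equiv.Perm G) (1 : G) = s := by
      rw [rhom_apply]
      simp
    have h2 : f u⁻¹ = s := by
      rw [← lhs, hr, rhs]
    have h3 : f⁻¹ s = u⁻¹ := by
      rw [← h2, Equiv.Perm.inv_apply_self]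
    rw [h3]
    exact S.inv_mem huS
  have hmult := mult_of_pointwise hSnormal hScent f hf1 hR hL hSinv
  have h4 : Hol G ≤ D2 G := by
    rw [D2]
    exact le_sup_left
  exact h4 (mult_mem_Hol f hmult)

lemma sigma_sq : (Equiv.inv G : Equiv.Perm G)⁻¹ = Equiv.inv G := by
  rw [Equiv.Perm.inv_def, Equiv.inv_symm]

/-- Conjugation by inversion swaps `L` and `R`. -/
lemma sigma_conj_R :
    Subgroup.map (MulAut.conj (Equiv.inv G : Equiv.Perm G)).toMonoidHom (rhom S).range
      = (lhom S).range := by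
  have key : ∀ s : S,
      (Equiv.inv G : Equiv.Perm G) * rhom S s * (Equiv.inv G : Equiv.Perm G)⁻¹ = lhom S s := by
    intro s
    rw [sigma_sq]
    ext x
    show ((rhom S s) x⁻¹)⁻¹ = lhom S s x
    rw [rhom_apply, lhom_apply]
    group
  apply le_antisymm
  · rintro π ⟨r, ⟨s, rfl⟩, rfl⟩
    exact ⟨s, (key s).symm⟩
  · rintro π ⟨s, rfl⟩
    exact ⟨rhom S s, ⟨s, rfl⟩, key s⟩

lemma sigma_conj_L :
    Subgroup.map (MulAut.conj (Equiv.inv G : Equiv.Perm G)).toMonoidHom (lhom S).range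
      = (rhom S).range := by
  have key : ∀ s : S,
      (Equiv.inv G : Equiv.Perm G) * lhom S s * (Equiv.inv G : Equiv.Perm G)⁻¹ = rhom S s := by
    intro s
    rw [sigma_sq]
    ext x
    show ((lhom S s) x⁻¹)⁻¹ = rhom S s x
    rw [rhom_apply, lhom_apply]
    group
  apply le_antisymm
  · rintro π ⟨r, ⟨s, rfl⟩, rfl⟩
    exact ⟨s, (key s).symm⟩
  · rintro π ⟨s, rfl⟩
    exact ⟨lhom S s, ⟨s, rfl⟩, key s⟩

/-- Main step: an element of the normalizer of `S*` fixing `1` lies in `D2 G`. -/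
lemma mem_D2_of_normalizer [Finite G] (hSnormal : S.Normal)
    (hScent : ∀ g : G, (∀ s ∈ S, g * s = s * g) → g = 1)
    (hSsimple : IsSimpleGroup S) (f : Equiv.Perm G)
    (hfN : f ∈ Subgroup.normalizer (starGroup S : Set (Equiv.Perm G))) (hf1 : f 1 = 1) : f ∈ D2 G := by
  haveI := hSsimple.toNontrivial
  have hφinj : Function.Injective (MulAut.conj f).toMonoidHom :=
    (MulAut.conj f).injective
  have hconjmem : ∀ π ∈ starGroup S, f * π * f⁻¹ ∈ starGroup S :=
    fun π h => (Subgroup.mem_normalizer_iff.mp hfN π).mp h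
  have hconjmem' : ∀ π ∈ starGroup S, f⁻¹ * π * f ∈ starGroup S := by
    intro π h
    apply (Subgroup.mem_normalizer_iff.mp hfN (f⁻¹ * π * f)).mpr
    have : f * (f⁻¹ * π * f) * f⁻¹ = π := by group
    rwa [this]
  -- verify hypotheses of `classify` for the image of `L`
  have hKle : Subgroup.map (MulAut.conj f).toMonoidHom (lhom S).range ≤ starGroup S := by
    rintro _ ⟨l, hl, rfl⟩
    exact hconjmem l (L_le_star hl)
  have hKnormal : ∀ k ∈ Subgroup.map (MulAut.conj f).toMonoidHom (lhom S).range,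
      ∀ t ∈ starGroup S, t * k * t⁻¹ ∈
        Subgroup.map (MulAut.conj f).toMonoidHom (lhom S).range := by
    rintro _ ⟨l, hl, rfl⟩ t ht
    refine ⟨(f⁻¹ * t * f) * l * (f⁻¹ * t * f)⁻¹,
      L_conj _ (hconjmem' t ht) l hl, ?_⟩
    show f * ((f⁻¹ * t * f) * l * (f⁻¹ * t * f)⁻¹) * f⁻¹ = t * (f * l * f⁻¹) * t⁻¹
    group
  have hKcard : Nat.card (Subgroup.map (MulAut.conj f).toMonoidHom (lhom S).range)
      ≤ Nat.card S := by
    have h1 : Nat.card (Subgroup.map (MulAut.conj f).toMonoidHom (lhom S).range)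
        = Nat.card (lhom S).range :=
      (Nat.card_congr ((lhom S).range.equivMapOfInjective _ hφinj).toEquiv).symm
    rw [h1, card_L]
  have hKne : Subgroup.map (MulAut.conj f).toMonoidHom (lhom S).range ≠ ⊥ := by
    obtain ⟨s₀, hs₀⟩ := exists_ne (1 : S)
    intro hbot
    have hmem : (MulAut.conj f).toMonoidHom (lhom S s₀) ∈
        Subgroup.map (MulAut.conj f).toMonoidHom (lhom S).range := ⟨_, ⟨s₀, rfl⟩, rfl⟩
    rw [hbot, Subgroup.mem_bot] at hmem
    have h1 : lhom S s₀ = 1 := hφinj (by rw [hmem, map_one])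
    exact hs₀ (lhom_injective (by rw [h1, map_one]))
  -- same for `R`
  have hK'le : Subgroup.map (MulAut.conj f).toMonoidHom (rhom S).range ≤ starGroup S := by
    rintro _ ⟨r, hr, rfl⟩
    exact hconjmem r (R_le_star hr)
  have hK'normal : ∀ k ∈ Subgroup.map (MulAut.conj f).toMonoidHom (rhom S).range,
      ∀ t ∈ starGroup S, t * k * t⁻¹ ∈
        Subgroup.map (MulAut.conj f).toMonoidHom (rhom S).range := by
    rintro _ ⟨r, hr, rfl⟩ t ht
    refine ⟨(f⁻¹ * t * f) * r * (f⁻¹ * t * f)⁻¹,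
      R_conj _ (hconjmem' t ht) r hr, ?_⟩
    show f * ((f⁻¹ * t * f) * r * (f⁻¹ * t * f)⁻¹) * f⁻¹ = t * (f * r * f⁻¹) * t⁻¹
    group
  have hK'card : Nat.card (Subgroup.map (MulAut.conj f).toMonoidHom (rhom S).range)
      ≤ Nat.card S := by
    have h1 : Nat.card (Subgroup.map (MulAut.conj f).toMonoidHom (rhom S).range)
        = Nat.card (rhom S).range :=
      (Nat.card_congr ((rhom S).range.equivMapOfInjective _ hφinj).toEquiv).symm
    rw [h1, card_R]
  have hK'ne : Subgroup.map (MulAut.conj f).toMonoidHom (rhom S).range ≠ ⊥ := by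
    obtain ⟨s₀, hs₀⟩ := exists_ne (1 : S)
    intro hbot
    have hmem : (MulAut.conj f).toMonoidHom (rhom S s₀) ∈
        Subgroup.map (MulAut.conj f).toMonoidHom (rhom S).range := ⟨_, ⟨s₀, rfl⟩, rfl⟩
    rw [hbot, Subgroup.mem_bot] at hmem
    have h1 : rhom S s₀ = 1 := hφinj (by rw [hmem, map_one])
    exact hs₀ (rhom_injective (by rw [h1, map_one]))
  have hK := classify hScent hSsimple _ hKle hKnormal hKcard hKne
  have hK' := classify hScent hSsimple _ hK'le hK'normal hK'card hK'ne
  rcases hK with hKL | hKR <;> rcases hK' with hK'L | hK'R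
  · -- both map to L : impossible
    exfalso
    exact L_ne_R hScent hSsimple
      (Subgroup.map_injective hφinj (hK'L.trans hKL.symm)).symm
  · -- straight case
    exact case_done hSnormal hScent f hf1 hKL hK'R
  · -- swapped case: compose with inversion
    set f' : Equiv.Perm G := Equiv.inv G * f with hf'
    have hf'1 : f' 1 = 1 := by
      show (f 1)⁻¹ = 1
      rw [hf1, inv_one]
    have hf'N : f' ∈ Subgroup.normalizer (starGroup S : Set (Equiv.Perm G)) :=
      Subgroup.mul_mem _ sigma_mem_normalizer hfN
    have hcomp : (MulAut.conj f').toMonoidHom =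
        ((MulAut.conj (Equiv.inv G : Equiv.Perm G)).toMonoidHom).comp
          (MulAut.conj f).toMonoidHom := by
      refine MonoidHom.ext fun k => ?_
      show (Equiv.inv G * f) * k * (Equiv.inv G * f)⁻¹ =
        Equiv.inv G * (f * k * f⁻¹) * (Equiv.inv G)⁻¹
      group
    have hmapL : Subgroup.map (MulAut.conj f').toMonoidHom (lhom S).range
        = (lhom S).range := by
      rw [hcomp, ← Subgroup.map_map, hKR, sigma_conj_R]
    have hmapR : Subgroup.map (MulAut.conj f').toMonoidHom (rhom S).range
        = (rhom S).range := by
      rw [hcomp, ← Subgroup.map_map, hK'L, sigma_conj_L]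
    have hf'D2 : f' ∈ D2 G := case_done hSnormal hScent f' hf'1 hmapL hmapR
    have hσD2 : (Equiv.inv G : Equiv.Perm G) ∈ D2 G := by
      have h5 : Subgroup.closure {Equiv.inv G} ≤ D2 G := by
        rw [D2]
        exact le_sup_right
      exact h5 (Subgroup.subset_closure rfl)
    have hfeq : f = (Equiv.inv G : Equiv.Perm G)⁻¹ * f' := by
      rw [hf']
      group
    rw [hfeq]
    exact Subgroup.mul_mem _ (Subgroup.inv_mem _ hσD2) hf'D2
  · -- both map to R : impossible
    exfalso
    exact L_ne_R hScent hSsimple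
      (Subgroup.map_injective hφinj (hKR.trans hK'R.symm))

end Stmt9

/-- the normalizer in `Sym(G)` of `S*` equals `D(2,G)`. -/
theorem normalizer_socle_star_eq_D2 (G : Type*) [Group G] [Fintype G]
    (S : Subgroup G) (hSnormal : S.Normal) (hSsimple : IsSimpleGroup S)
    (hSnonabelian : ¬ ∀ a b : S, a * b = b * a)
    (hScent : ∀ g : G, (∀ s ∈ S, g * s = s * g) → g = 1)
    : Subgroup.normalizer (starGroup S : Set (Equiv.Perm G)) = D2 G := by
  apply le_antisymm
  · intro f hf
    have hmlN := Stmt9.rmul_mem_normalizer hSnormal (f 1)⁻¹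
    have hmlHol : (Equiv.mulRight (f 1)⁻¹ : Equiv.Perm G) ∈ Hol G := by
      apply Subgroup.le_normalizer
      exact ⟨MulOpposite.op (f 1)⁻¹, Equiv.ext fun x => rfl⟩
    have hmlD2 : (Equiv.mulRight (f 1)⁻¹ : Equiv.Perm G) ∈ D2 G := by
      have h1 : Hol G ≤ D2 G := by
        rw [D2]
        exact le_sup_left
      exact h1 hmlHol
    have hf₀N : (Equiv.mulRight (f 1)⁻¹ : Equiv.Perm G) * f ∈ Subgroup.normalizer (starGroup S : Set (Equiv.Perm G)) :=
      Subgroup.mul_mem _ hmlN hf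
    have hf₀1 : ((Equiv.mulRight (f 1)⁻¹ : Equiv.Perm G) * f) 1 = 1 := by
      show f 1 * (f 1)⁻¹ = 1
      simp
    have hf₀D2 := Stmt9.mem_D2_of_normalizer hSnormal hScent hSsimple _ hf₀N hf₀1
    have hfeq : f = (Equiv.mulRight (f 1)⁻¹ : Equiv.Perm G)⁻¹ *
        ((Equiv.mulRight (f 1)⁻¹ : Equiv.Perm G) * f) := by group
    rw [hfeq]
    exact Subgroup.mul_mem _ (Subgroup.inv_mem _ hmlD2) hf₀D2
  · exact Stmt9.D2_le_normalizer hSnormal hScent hSsimple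
end

section
/- Let G be a finite group with a normal subgroup S that is simple and nonabelian and whose centralizer in G is trivial (so G is almost simple with socle S). Then the centralizer in Sym(G) of the subgroup S* is trivial. -/
/-- the centralizer in `Sym(G)` of `S*` is trivial. -/
theorem centralizer_socle_star_eq_bot (G : Type*) [Group G] [Fintype G]
    (S : Subgroup G) (hSnormal : S.Normal) (hSsimple : IsSimpleGroup S)
    (hSnonabelian : ¬ ∀ a b : S, a * b = b * a)
    (hScent : ∀ g : G, (∀ s ∈ S, g * s = s * g) → g = 1)
    : Subgroup.centralizer (starGroup S : Set (Equiv.Perm G)) = ⊥ := by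
  rw [eq_bot_iff]
  intro f hf
  have hf' := Subgroup.mem_centralizer_iff.mp hf
  have comm : ∀ s t : S, ∀ y : G,
      (s : G) * f y * (t : G)⁻¹ = f ((s : G) * y * (t : G)⁻¹) := by
    intro s t y
    have hm : biTransHom S (s, t) ∈ starGroup S := ⟨(s, t), rfl⟩
    have h := hf' _ hm
    have h2 := congrArg (fun p : Equiv.Perm G => p y) h
    simpa [biTransHom, Equiv.Perm.mul_apply] using h2
  have hx : ∀ x : G, f x = x := by
    intro x
    have hc : ∀ s ∈ S, (f x * x⁻¹) * s = s * (f x * x⁻¹) := by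
      intro s hs
      have h1 : (s : G) * f x = f (s * x) := by
        simpa using comm ⟨s, hs⟩ 1 x
      have hu : x⁻¹ * s * x ∈ S := by
        have := hSnormal.conj_mem s hs x⁻¹
        simpa using this
      have h2 : f x * (x⁻¹ * s * x) = f (x * (x⁻¹ * s * x)) := by
        have := comm 1 ⟨(x⁻¹ * s * x)⁻¹, S.inv_mem hu⟩ x
        simpa using this
      have h3 : s * x = x * (x⁻¹ * s * x) := by group
      have h4 : s * f x = f x * (x⁻¹ * s * x) := by
        rw [h1, h3, ← h2]
      calc (f x * x⁻¹) * s = (f x * (x⁻¹ * s * x)) * x⁻¹ := by group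
        _ = (s * f x) * x⁻¹ := by rw [h4]
        _ = s * (f x * x⁻¹) := by group
    have := hScent (f x * x⁻¹) hc
    have := mul_inv_eq_one.mp this
    exact this
  have : f = 1 := Equiv.ext hx
  simpa [Subgroup.mem_bot] using this
end
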